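/- Let n, r, q be positive integers with r, q ≥ 2 and set k = ⌊(n+q−1)/(r+q−1)⌋. Then there exists a q-colouring of the r-element subsets of [n] such that every monochromatic matching has size at most k. -/

import Mathlib

/-- **Optimality of the Alon–Frankl–Lovász theorem.** For positive integers `n, r, q`
with `r, q ≥ 2` and `k = ⌊(n + q - 1) / (r + q - 1)⌋`, there is a `q`-colouring of the
`r`-element subsets of `[n]` in which every monochromatic matching has size at most `k`. -/
theorem afl_optimal_colouring (n r q : ℕ) (hn : 0 < n) (hr : 2 ≤ r) (hq : 2 ≤ q) :
    ∃ c : Finset (Fin n) → Fin q,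
      ∀ M : Finset (Finset (Fin n)),
        (∀ e ∈ M, e.card = r) →
        (∀ e ∈ M, ∀ f ∈ M, e ≠ f → Disjoint e f) →
        (∃ i : Fin q, ∀ e ∈ M, c e = i) →
        M.card ≤ (n + q - 1) / (r + q - 1) := by
  set k := (n + q - 1) / (r + q - 1) with hkdef
  by_cases hk0 : k = 0
  · refine ⟨fun _ => ⟨0, by omega⟩, fun M hcard hdisj _ => ?_⟩
    have hnr : n < r := by
      by_contra h
      have : 1 ≤ (n + q - 1) / (r + q - 1) :=
        (Nat.one_le_div_iff (by omega)).2 (by omega)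
      omega
    have hM : M = ∅ := by
      rw [Finset.eq_empty_iff_forall_notMem]
      intro e he
      have h1 := hcard e he
      have h2 : e.card ≤ n := by
        simpa using Finset.card_le_card (Finset.subset_univ e)
      omega
    simp [hM]
  · have hkpos : 0 < k := Nat.pos_of_ne_zero hk0
    refine ⟨fun e => ⟨min ((if h : e.Nonempty then ((e.min' h : ℕ)) else 0) / k) (q-1),
      by omega⟩, ?_⟩
    rintro M hcard hdisj ⟨i, hi⟩
    have hne : ∀ e ∈ M, e.Nonempty := fun e he =>
      Finset.card_pos.1 (by rw [hcard e he]; omega)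
    have hval : ∀ e ∈ M, ∀ he : e.Nonempty,
        min (((e.min' he : Fin n) : ℕ) / k) (q-1) = (i : ℕ) := by
      intro e he he'
      have h1 := congrArg Fin.val (hi e he)
      simp only [dif_pos he'] at h1
      exact h1
    by_cases hcase : (i : ℕ) < q - 1
    · -- all minima lie in [i*k, i*k + k)
      have hdiv : ∀ e ∈ M, ∀ he : e.Nonempty, ((e.min' he : Fin n) : ℕ) / k = (i : ℕ) := by
        intro e he he'
        have := hval e he he'
        omega
      have hcardle : M.card ≤ (Finset.Ico ((i:ℕ)*k) ((i:ℕ)*k + k)).card := by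
        apply Finset.card_le_card_of_injOn
          (fun e => if h : e.Nonempty then ((e.min' h : Fin n) : ℕ) else 0)
        · intro e he
          simp only [Finset.mem_coe, Finset.mem_Ico, dif_pos (hne e he)]
          have hd := hdiv e he (hne e he)
          constructor
          · have : (i:ℕ) ≤ ((e.min' (hne e he) : Fin n) : ℕ) / k := le_of_eq hd.symm
            have := (Nat.le_div_iff_mul_le hkpos).1 this
            omega
          · have : ((e.min' (hne e he) : Fin n) : ℕ) / k < (i:ℕ) + 1 := by omega
            have := (Nat.div_lt_iff_lt_mul hkpos).1 this
            have h2 : ((i:ℕ)+1)*k = (i:ℕ)*k + k := by ring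
            omega
        · intro e he f hf hef
          simp only [dif_pos (hne e he), dif_pos (hne f hf)] at hef
          by_contra hnef
          have hd := hdisj e he f hf hnef
          have heq : e.min' (hne e he) = f.min' (hne f hf) := Fin.ext hef
          exact Finset.disjoint_left.1 hd (Finset.min'_mem e (hne e he))
            (heq ▸ Finset.min'_mem f (hne f hf))
      have : (Finset.Ico ((i:ℕ)*k) ((i:ℕ)*k + k)).card = k := by
        rw [Nat.card_Ico]; omega
      omega
    · -- all vertices of all edges are ≥ (q-1)*k
      have hge : ∀ e ∈ M, ∀ v ∈ e, (q-1)*k ≤ (v : ℕ) := by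
        intro e he v hv
        have h1 := hval e he (hne e he)
        have hmin : (q-1) ≤ ((e.min' (hne e he) : Fin n) : ℕ) / k := by omega
        have h2 : (q-1)*k ≤ ((e.min' (hne e he) : Fin n) : ℕ) :=
          (Nat.le_div_iff_mul_le hkpos).1 hmin
        have h3 : e.min' (hne e he) ≤ v := Finset.min'_le e v hv
        have h4 : ((e.min' (hne e he) : Fin n) : ℕ) ≤ (v : ℕ) := h3
        omega
      -- the union of M has card M.card * r and fits in [(q-1)*k, n)
      have hbu : (M.biUnion id).card = M.card * r := by
        have h1 : (M.biUnion id).card = ∑ e ∈ M, (id e).card :=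
          Finset.card_biUnion (fun e he f hf h => hdisj e he f hf h)
        rw [h1]
        simp only [id_eq]
        rw [Finset.sum_congr rfl (fun e he => hcard e he), Finset.sum_const, smul_eq_mul]
      have hsub : M.biUnion id ⊆ Finset.univ.filter (fun v : Fin n => (q-1)*k ≤ (v:ℕ)) := by
        intro v hv
        simp only [Finset.mem_biUnion, id] at hv
        obtain ⟨e, he, hve⟩ := hv
        simp only [Finset.mem_filter, Finset.mem_univ, true_and]
        exact hge e he v hve
      have hfilt : (Finset.univ.filter (fun v : Fin n => (q-1)*k ≤ (v:ℕ))).card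
          ≤ n - (q-1)*k := by
        have h2 : (Finset.univ.filter (fun v : Fin n => (q-1)*k ≤ (v:ℕ))).card
            ≤ (Finset.Ico ((q-1)*k) n).card := by
          refine Finset.card_le_card_of_injOn (fun v : Fin n => (v:ℕ)) ?_ ?_
          · intro v hv
            simp only [Finset.mem_coe, Finset.mem_filter, Finset.mem_univ, true_and] at hv
            simp only [Finset.mem_coe, Finset.mem_Ico]
            exact ⟨hv, v.isLt⟩
          · intro a _ b _ hab
            exact Fin.ext hab
        rwa [Nat.card_Ico] at h2
      have hle : M.card * r ≤ n - (q-1)*k :=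
        hbu ▸ le_trans (Finset.card_le_card hsub) hfilt
      -- arithmetic
      have hub : n + q - 1 < (k+1)*(r+q-1) := by
        have : (n + q - 1) / (r + q - 1) < k + 1 := by omega
        exact (Nat.div_lt_iff_lt_mul (by omega)).1 this
      obtain ⟨q', rfl⟩ : ∃ q', q = q' + 1 := ⟨q-1, by omega⟩
      simp only [Nat.add_sub_cancel] at hle
      have e1 : r + (q'+1) - 1 = r + q' := by omega
      have e2 : n + (q'+1) - 1 = n + q' := by omega
      rw [e1, e2] at hub
      have key : ∀ X P Q : ℕ, X ≤ n - P → n + q' < Q + P + r + q' → X < Q + r := by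
        intro X P Q h1 h2; omega
      have hfin : M.card * r < (k+1) * r := by
        have h3 : M.card * r < k*r + r :=
          key (M.card * r) (q'*k) (k*r) hle (by nlinarith [hub])
        nlinarith [h3]
      have := Nat.lt_of_mul_lt_mul_right hfin
      omega
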